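/- Let n ≥ 1, γ > 0, ε_i > 0 for i = 1,…,n, S = Σ_{j=1}^n 1/ε_j, and d_i* = 1/(2 ε_i (1 + γ S)). Define the artificial cost coefficients a_i = −γ(1 − ε_i S) and b_i = −a_i / (2 ε_i (1 + γ S)). Then d* is a Nash equilibrium of the game with artificial costs: for every i, the function x ↦ x − γ x (x + Σ_{j≠i} d_j*) − ε_i x² − a_i x² − b_i x attains its unique maximum over ℝ at x = d_i*. Hence the artificial Nash equilibrium coincides with the grand-coalition solution (first claim of Lemma 2). -/

import Mathlib

open Finset

/-- first claim of Lemma 2: with artificial cost coefficients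
`aᵢ = −γ(1 − εᵢ S)` and `bᵢ = −aᵢ/(2 εᵢ (1 + γ S))`, the grand-coalition
solution `d* i = 1/(2 εᵢ (1 + γ S))` is a Nash equilibrium of the game with
artificial costs: each storage's artificial profit attains its unique maximum
over ℝ at `d* i`. -/
theorem acf_fixes_ne (n : ℕ) (hn : 1 ≤ n) (γ : ℝ) (hγ : 0 < γ)
    (ε : Fin n → ℝ) (hε : ∀ i, 0 < ε i)
    (S : ℝ) (hS : S = ∑ j, 1 / ε j)
    (dstar : Fin n → ℝ) (hdstar : ∀ i, dstar i = 1 / (2 * ε i * (1 + γ * S)))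
    (a b : Fin n → ℝ)
    (ha : ∀ i, a i = -γ * (1 - ε i * S))
    (hb : ∀ i, b i = -a i / (2 * ε i * (1 + γ * S))) :
    ∀ i, ∀ x : ℝ,
      (x - γ * x * (x + ∑ j ∈ univ.erase i, dstar j) - ε i * x ^ 2
          - a i * x ^ 2 - b i * x ≤
        dstar i - γ * dstar i * (dstar i + ∑ j ∈ univ.erase i, dstar j)
          - ε i * (dstar i) ^ 2 - a i * (dstar i) ^ 2 - b i * dstar i) ∧
      (x - γ * x * (x + ∑ j ∈ univ.erase i, dstar j) - ε i * x ^ 2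
          - a i * x ^ 2 - b i * x =
        dstar i - γ * dstar i * (dstar i + ∑ j ∈ univ.erase i, dstar j)
          - ε i * (dstar i) ^ 2 - a i * (dstar i) ^ 2 - b i * dstar i →
        x = dstar i) := by
  -- S is positive
  have hS0 : 0 < S := by
    rw [hS]
    have : (0:ℝ) < ∑ j : Fin n, 1 / ε j := by
      apply Finset.sum_pos
      · intro j _
        exact one_div_pos.mpr (hε j)
      · simpa [Finset.univ_nonempty_iff, ← Fin.pos_iff_nonempty] using (show 0 < n by omega)
    exact this
  have hK : 0 < 1 + γ * S := by positivity
  intro i x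
  have hεi := hε i
  set T := ∑ j ∈ univ.erase i, dstar j with hT
  -- total sum of dstar
  have hsum : ∑ j, dstar j = S / (2 * (1 + γ * S)) := by
    have : ∑ j, dstar j = ∑ j, (1 / ε j) * (1 / (2 * (1 + γ * S))) := by
      apply Finset.sum_congr rfl
      intro j _
      rw [hdstar j]
      field_simp
    rw [this, ← Finset.sum_mul, ← hS]
    field_simp
  have hTval : T = S / (2 * (1 + γ * S)) - dstar i := by
    rw [hT, Finset.sum_erase_eq_sub (Finset.mem_univ i), hsum]
  have hbT : b i = -(γ * T) := by
    rw [hb i, ha i, hTval, hdstar i]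
    field_simp
    ring
  have key : (dstar i - γ * dstar i * (dstar i + T) - ε i * (dstar i) ^ 2
        - a i * (dstar i) ^ 2 - b i * dstar i)
      - (x - γ * x * (x + T) - ε i * x ^ 2 - a i * x ^ 2 - b i * x)
      = ε i * (1 + γ * S) * (x - dstar i) ^ 2 := by
    rw [hbT, ha i, hdstar i]
    field_simp
    ring
  constructor
  · nlinarith [sq_nonneg (x - dstar i), mul_pos hεi hK]
  · intro hEq
    have h0 : ε i * (1 + γ * S) * (x - dstar i) ^ 2 = 0 := by
      rw [← key, hEq]; ring
    have hne : ε i * (1 + γ * S) ≠ 0 := ne_of_gt (mul_pos hεi hK)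
    have := mul_eq_zero.mp h0
    rcases this with h | h
    · exact absurd h hne
    · have := pow_eq_zero_iff (n := 2) (by norm_num) |>.mp h
      linarith [this]
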